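/- arXiv:2101.01768 — 5 statements merged into one kernel-verified Lean document; each statement's English description precedes it below -/
import Mathlib

section
/- Let G_c be a finite simple graph, i a vertex of G_c, and S_i a set of vertices that is a union of cliques each of which contains i and is contained in N[i] (equivalently, i ∈ S_i ⊆ N[i]). Define M'_i = (N[i] ∪ M_{i,2}) \ S_i, where M_{i,2} is the set of vertices at graph distance exactly 2 from i in G_c. If M'_i = ∅, then S_i is a feasible set. If M'_i ≠ ∅, then S_i is a feasible set if and only if for every maximal independent set I of the subgraph of G_c induced on M'_i, there exists at least one vertex of S_i that is not adjacent in G_c to any vertex of I. -/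
variable {V : Type*} [Fintype V] [DecidableEq V]

/-- `I` is an independent set of `G`: pairwise non-adjacent vertices. -/
def IsIndepF (G : SimpleGraph V) (I : Finset V) : Prop :=
  ∀ a ∈ I, ∀ b ∈ I, ¬ G.Adj a b

/-- `I` is a maximal independent set of `G`: independent and not a proper
subset of any independent set of `G`. -/
def IsMaxIndepF (G : SimpleGraph V) (I : Finset V) : Prop :=
  IsIndepF G I ∧ ∀ J : Finset V, IsIndepF G J → I ⊆ J → I = J

/-- `S` is a feasible set of `G`: the minimum, over all maximal independent
sets `mis` of `G`, of `|mis ∩ S|` equals `1`. -/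
def FeasibleSet (G : SimpleGraph V) (S : Finset V) : Prop :=
  sInf {n : ℕ | ∃ I : Finset V, IsMaxIndepF G I ∧ (I ∩ S).card = n} = 1

/-- `I` is a maximal independent set of the subgraph of `G` induced on `W`:
`I ⊆ W`, `I` is independent, and `I` is not a proper subset of any
independent subset of `W`. -/
def IsMaxIndepOnF (G : SimpleGraph V) (W I : Finset V) : Prop :=
  I ⊆ W ∧ IsIndepF G I ∧ ∀ J : Finset V, J ⊆ W → IsIndepF G J → I ⊆ J → I = J

lemma exists_maxIndepOn_extend (G : SimpleGraph V) (W J : Finset V)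
    (hJW : J ⊆ W) (hJ : IsIndepF G J) :
    ∃ K, J ⊆ K ∧ IsMaxIndepOnF G W K := by
  classical
  let T := W.powerset.filter (fun K => IsIndepF G K ∧ J ⊆ K)
  have hJT : J ∈ T := by simp [T, Finset.mem_powerset, hJW, hJ]
  obtain ⟨K, hKT, hmax⟩ := T.exists_max_image (fun K => K.card) ⟨J, hJT⟩
  simp only [T, Finset.mem_filter, Finset.mem_powerset] at hKT
  refine ⟨K, hKT.2.2, hKT.1, hKT.2.1, ?_⟩
  intro L hLW hL hKL
  have hLT : L ∈ T := by
    simp only [T, Finset.mem_filter, Finset.mem_powerset]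
    exact ⟨hLW, hL, hKT.2.2.trans hKL⟩
  exact Finset.eq_of_subset_of_card_le hKL (hmax L hLT)

lemma exists_maxIndep_extend (G : SimpleGraph V) (J : Finset V) (hJ : IsIndepF G J) :
    ∃ K, J ⊆ K ∧ IsMaxIndepF G K := by
  obtain ⟨K, hJK, hK⟩ := exists_maxIndepOn_extend G Finset.univ J (Finset.subset_univ J) hJ
  exact ⟨K, hJK, hK.2.1, fun L hL hKL => hK.2.2 L (Finset.subset_univ L) hL hKL⟩

lemma feasible_iff_meets (G : SimpleGraph V) [DecidableRel G.Adj] (i : V) (S : Finset V)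
    (hiS : i ∈ S) (hSN : S ⊆ insert i (G.neighborFinset i)) :
    FeasibleSet G S ↔ ∀ I, IsMaxIndepF G I → (I ∩ S).Nonempty := by
  have hone : ∃ I, IsMaxIndepF G I ∧ (I ∩ S).card = 1 := by
    have hsi : IsIndepF G ({i} : Finset V) := by
      intro a ha b hb
      simp only [Finset.mem_singleton] at ha hb
      subst ha; subst hb; exact G.loopless.irrefl _
    obtain ⟨K, hiK, hK⟩ := exists_maxIndep_extend G {i} hsi
    refine ⟨K, hK, ?_⟩
    have : K ∩ S = {i} := by
      ext s
      simp only [Finset.mem_inter, Finset.mem_singleton]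
      constructor
      · rintro ⟨hsK, hsS⟩
        rcases Finset.mem_insert.mp (hSN hsS) with h | h
        · exact h
        · rw [SimpleGraph.mem_neighborFinset] at h
          exact absurd h.symm (hK.1 s hsK i (hiK (Finset.mem_singleton_self i)))
      · rintro rfl; exact ⟨hiK (by simp), hiS⟩
    rw [this, Finset.card_singleton]
  constructor
  · intro hfeas I hI
    by_contra hempty
    rw [Finset.not_nonempty_iff_eq_empty] at hempty
    have h0 : (0 : ℕ) ∈ {n : ℕ | ∃ I : Finset V, IsMaxIndepF G I ∧ (I ∩ S).card = n} :=
      ⟨I, hI, by rw [hempty]; simp⟩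
    unfold FeasibleSet at hfeas
    have := Nat.sInf_le h0
    omega
  · intro hmeet
    obtain ⟨I₁, hI₁, hc₁⟩ := hone
    have h1 : (1 : ℕ) ∈ {n : ℕ | ∃ I : Finset V, IsMaxIndepF G I ∧ (I ∩ S).card = n} :=
      ⟨I₁, hI₁, hc₁⟩
    have hle := Nat.sInf_le h1
    have hmem := Nat.sInf_mem (Set.nonempty_of_mem h1)
    obtain ⟨I₂, hI₂, hc₂⟩ := hmem
    have hpos := Finset.card_pos.mpr (hmeet I₂ hI₂)
    unfold FeasibleSet
    omega


/-- Feasibility test via the two-hop neighborhood. Let `i ∈ S ⊆ N[i]`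
(equivalently, `S` is a union of cliques each containing `i` and contained in
`N[i]`), and let `M' = (N[i] ∪ M_{i,2}) \ S`, where `M_{i,2}` is the set of
vertices at distance exactly `2` from `i`. If `M' = ∅` then `S` is feasible;
if `M' ≠ ∅` then `S` is feasible iff for every maximal independent set `I` of
the subgraph induced on `M'` some vertex of `S` is adjacent to no vertex of `I`. -/
theorem feasible_iff_twoHop_test (G : SimpleGraph V) [DecidableRel G.Adj]
    (i : V) (S : Finset V) (hiS : i ∈ S)
    (hSN : S ⊆ insert i (G.neighborFinset i))
    (M' : Finset V)
    (hM' : M' = (insert i (G.neighborFinset i) ∪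
      Finset.univ.filter (fun v => G.dist i v = 2)) \ S) :
    (M' = ∅ → FeasibleSet G S) ∧
      (M' ≠ ∅ → (FeasibleSet G S ↔
        ∀ I : Finset V, IsMaxIndepOnF G M' I →
          ∃ s ∈ S, ∀ v ∈ I, ¬ G.Adj s v)) := by
  rw [feasible_iff_meets G i S hiS hSN]
  -- membership characterization of M'
  have hmemM' : ∀ v, v ∈ M' ↔
      ((v = i ∨ G.Adj i v) ∨ G.dist i v = 2) ∧ v ∉ S := by
    intro v
    subst hM'
    simp only [Finset.mem_sdiff, Finset.mem_union, Finset.mem_insert,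
      SimpleGraph.mem_neighborFinset, Finset.mem_filter, Finset.mem_univ, true_and]
  constructor
  · -- M' = ∅ case
    intro hMe I hI
    by_contra hempty
    rw [Finset.not_nonempty_iff_eq_empty] at hempty
    have hdisj : ∀ s ∈ S, s ∉ I := by
      intro s hs hsI
      have : s ∈ I ∩ S := Finset.mem_inter.mpr ⟨hsI, hs⟩
      rw [hempty] at this; exact absurd this (Finset.notMem_empty s)
    -- N[i] ⊆ S since M' = ∅
    have hNsub : ∀ v, (v = i ∨ G.Adj i v) → v ∈ S := by
      intro v hv
      by_contra hvS
      have : v ∈ M' := (hmemM' v).mpr ⟨Or.inl hv, hvS⟩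
      rw [hMe] at this; exact absurd this (Finset.notMem_empty v)
    -- insert i I is independent
    have hind : IsIndepF G (insert i I) := by
      intro a ha b hb hab
      rcases Finset.mem_insert.mp ha with rfl | ha'
      · rcases Finset.mem_insert.mp hb with rfl | hb'
        · exact G.loopless.irrefl _ hab
        · exact hdisj b (hNsub b (Or.inr hab)) hb'
      · rcases Finset.mem_insert.mp hb with rfl | hb'
        · exact hdisj a (hNsub a (Or.inr hab.symm)) ha'
        · exact hI.1 a ha' b hb' hab
    have := hI.2 (insert i I) hind (Finset.subset_insert i I)
    have hiI : i ∈ I := this ▸ Finset.mem_insert_self i I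
    exact hdisj i hiS hiI
  · -- M' ≠ ∅ case
    intro _
    constructor
    · -- feasible → test
      intro hmeet K hK
      obtain ⟨I, hKI, hI⟩ := exists_maxIndep_extend G K hK.2.1
      obtain ⟨s, hs⟩ := hmeet I hI
      obtain ⟨hsI, hsS⟩ := Finset.mem_inter.mp hs
      exact ⟨s, hsS, fun v hv => hI.1 s hsI v (hKI hv)⟩
    · -- test → feasible
      intro htest I hI
      by_contra hempty
      rw [Finset.not_nonempty_iff_eq_empty] at hempty
      have hdisj : ∀ s ∈ S, s ∉ I := by
        intro s hs hsI
        have : s ∈ I ∩ S := Finset.mem_inter.mpr ⟨hsI, hs⟩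
        rw [hempty] at this; exact absurd this (Finset.notMem_empty s)
      -- J = I ∩ M' is independent, extend to max indep K of M'
      have hJind : IsIndepF G (I ∩ M') := fun a ha b hb =>
        hI.1 a (Finset.mem_of_mem_inter_left ha) b (Finset.mem_of_mem_inter_left hb)
      obtain ⟨K, hJK, hK⟩ := exists_maxIndepOn_extend G M' (I ∩ M')
        (Finset.inter_subset_right) hJind
      obtain ⟨s, hsS, hs⟩ := htest K hK
      -- s is not adjacent to anything in I
      have hkey : ∀ u ∈ I, ¬ G.Adj s u := by
        intro u huI hadj
        -- u ∈ N[i] ∪ dist2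
        have hu2 : (u = i ∨ G.Adj i u) ∨ G.dist i u = 2 := by
          rcases Finset.mem_insert.mp (hSN hsS) with rfl | hsN
          · exact Or.inl (Or.inr hadj)
          · rw [SimpleGraph.mem_neighborFinset] at hsN
            by_cases hui : u = i
            · exact Or.inl (Or.inl hui)
            by_cases hadj2 : G.Adj i u
            · exact Or.inl (Or.inr hadj2)
            · refine Or.inr ?_
              have hw : G.dist i u ≤ 2 := by
                have := SimpleGraph.dist_le
                  (SimpleGraph.Walk.cons hsN (SimpleGraph.Walk.cons hadj SimpleGraph.Walk.nil))
                simpa using this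
              have h0 : G.dist i u ≠ 0 := by
                intro h
                rcases SimpleGraph.dist_eq_zero_iff_eq_or_not_reachable.mp h with h' | h'
                · exact hui h'.symm
                · exact h' ⟨SimpleGraph.Walk.cons hsN
                    (SimpleGraph.Walk.cons hadj SimpleGraph.Walk.nil)⟩
              have h1 : G.dist i u ≠ 1 := by
                intro h
                exact hadj2 (SimpleGraph.dist_eq_one_iff_adj.mp h)
              omega
        have huS : u ∉ S := fun h => hdisj u h huI
        have huM' : u ∈ M' := (hmemM' u).mpr ⟨hu2, fun h => huS h⟩
        have huK : u ∈ K := hJK (Finset.mem_inter.mpr ⟨huI, huM'⟩)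
        exact hs u huK hadj
      -- insert s I is independent
      have hind : IsIndepF G (insert s I) := by
        intro a ha b hb hab
        rcases Finset.mem_insert.mp ha with rfl | ha'
        · rcases Finset.mem_insert.mp hb with rfl | hb'
          · exact G.loopless.irrefl _ hab
          · exact hkey b hb' hab
        · rcases Finset.mem_insert.mp hb with rfl | hb'
          · exact hkey a ha' hab.symm
          · exact hI.1 a ha' b hb' hab
      have := hI.2 (insert s I) hind (Finset.subset_insert s I)
      exact hdisj s hsS (this ▸ Finset.mem_insert_self s I)
end

section
/- Let G_c be a finite simple graph, i a vertex of G_c, and S a set of vertices with i ∈ S ⊆ N[i]. Define M' = (N[i] ∪ M_{i,2}) \ S, where M_{i,2} is the set of vertices at graph distance exactly 2 from i in G_c, and suppose M' ≠ ∅. Then no maximal independent set of G_c is disjoint from S if and only if for every maximal independent set I of the subgraph of G_c induced on M', there exists a vertex s ∈ S that is not adjacent in G_c to any vertex of I. -/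
variable {V : Type*} [Fintype V] [DecidableEq V]

instance (G : SimpleGraph V) [DecidableRel G.Adj] (I : Finset V) :
    Decidable (IsIndepF G I) := by unfold IsIndepF; infer_instance

/-- Every independent subset of `W` extends to a maximal independent set of `W`. -/
lemma exists_max_indep_on (G : SimpleGraph V) [DecidableRel G.Adj] (W I : Finset V)
    (hIW : I ⊆ W) (hI : IsIndepF G I) :
    ∃ J : Finset V, I ⊆ J ∧ IsMaxIndepOnF G W J := by
  classical
  set T : Finset (Finset V) := W.powerset.filter (fun J => IsIndepF G J ∧ I ⊆ J) with hT
  have hIT : I ∈ T := by simp [hT, Finset.mem_powerset, hIW, hI]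
  obtain ⟨J, hJT, hJmax⟩ := T.exists_max_image Finset.card ⟨I, hIT⟩
  simp only [hT, Finset.mem_filter, Finset.mem_powerset] at hJT
  refine ⟨J, hJT.2.2, hJT.1, hJT.2.1, ?_⟩
  intro J' hJ'W hJ' hJJ'
  have hJ'T : J' ∈ T := by
    simp [hT, Finset.mem_powerset, hJ'W, hJ', hJT.2.2.trans hJJ']
  exact Finset.eq_of_subset_of_card_le hJJ' (hJmax _ hJ'T)

/-- Let `i ∈ S ⊆ N[i]` and `M' = (N[i] ∪ M_{i,2}) \ S ≠ ∅`, where `M_{i,2}`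
is the set of vertices at distance exactly `2` from `i`. Then no maximal
independent set of `G` is disjoint from `S` iff for every maximal independent
set `I` of the subgraph induced on `M'` there is `s ∈ S` adjacent to no
vertex of `I`. -/
theorem no_disjoint_maxIndep_iff_twoHop (G : SimpleGraph V) [DecidableRel G.Adj]
    (i : V) (S : Finset V) (hiS : i ∈ S)
    (hSN : S ⊆ insert i (G.neighborFinset i))
    (M' : Finset V)
    (hM' : M' = (insert i (G.neighborFinset i) ∪
      Finset.univ.filter (fun v => G.dist i v = 2)) \ S)
    (hne : M' ≠ ∅) :
    (¬ ∃ I : Finset V, IsMaxIndepF G I ∧ I ∩ S = ∅) ↔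
      ∀ I : Finset V, IsMaxIndepOnF G M' I → ∃ s ∈ S, ∀ v ∈ I, ¬ G.Adj s v := by
  constructor
  · -- forward
    intro hL I hImax
    by_contra hcon
    push_neg at hcon
    -- extend I to a maximal independent set of G
    obtain ⟨J, hIJ, _, hJindep, hJmax⟩ :=
      exists_max_indep_on G Finset.univ I (Finset.subset_univ _) hImax.2.1
    refine hL ⟨J, ⟨hJindep, fun K hK hJK => hJmax K (Finset.subset_univ _) hK hJK⟩, ?_⟩
    rw [Finset.eq_empty_iff_forall_notMem]
    intro s hs
    rw [Finset.mem_inter] at hs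
    obtain ⟨v, hvI, hadj⟩ := hcon s hs.2
    exact hJindep s hs.1 v (hIJ hvI) hadj
  · -- backward
    intro hR hL
    obtain ⟨J, hJmax, hJS⟩ := hL
    -- extend J ∩ M' to a maximal independent set of M'
    have hint : IsIndepF G (J ∩ M') := fun a ha b hb =>
      hJmax.1 a (Finset.mem_inter.mp ha).1 b (Finset.mem_inter.mp hb).1
    obtain ⟨I, hJI, hImax⟩ :=
      exists_max_indep_on G M' (J ∩ M') Finset.inter_subset_right hint
    obtain ⟨s, hsS, hsI⟩ := hR I hImax
    have hsJ : s ∉ J := by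
      intro h
      have : s ∈ J ∩ S := Finset.mem_inter.mpr ⟨h, hsS⟩
      simp [hJS] at this
    -- J maximal ⇒ s has a neighbor w in J
    have : ¬ IsIndepF G (insert s J) := by
      intro hind
      have := hJmax.2 _ hind (Finset.subset_insert s J)
      exact hsJ (this ▸ Finset.mem_insert_self s J)
    have hw : ∃ w ∈ J, G.Adj s w := by
      by_contra hw
      push_neg at hw
      apply this
      intro a ha b hb
      rcases Finset.mem_insert.mp ha with rfl | haJ
      · rcases Finset.mem_insert.mp hb with rfl | hbJ
        · exact fun h => G.loopless.irrefl _ h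
        · exact hw b hbJ
      · rcases Finset.mem_insert.mp hb with rfl | hbJ
        · exact fun h => hw a haJ h.symm
        · exact hJmax.1 a haJ b hbJ
    obtain ⟨w, hwJ, hsw⟩ := hw
    -- w ∈ M'
    have hwS : w ∉ S := fun h => by
      have : w ∈ J ∩ S := Finset.mem_inter.mpr ⟨hwJ, h⟩
      simp [hJS] at this
    have hwM : w ∈ M' := by
      rw [hM', Finset.mem_sdiff]
      refine ⟨?_, hwS⟩
      rcases Finset.mem_insert.mp (hSN hsS) with rfl | hsN
      · exact Finset.mem_union_left _ (Finset.mem_insert.mpr (Or.inr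
          ((G.mem_neighborFinset s w).mpr hsw)))
      · -- s adjacent to i, s adjacent to w : dist i w ≤ 2
        have hadj_is : G.Adj i s := (G.mem_neighborFinset i s).mp hsN
        have hwi : w ≠ i := fun h => hwS (h ▸ hiS)
        have hdle : G.dist i w ≤ 2 := by
          have := G.dist_le (SimpleGraph.Walk.cons hadj_is
            (SimpleGraph.Walk.cons hsw SimpleGraph.Walk.nil))
          simpa using this
        have hdpos : G.dist i w ≠ 0 := by
          have hr : G.Reachable i w := ⟨SimpleGraph.Walk.cons hadj_is
            (SimpleGraph.Walk.cons hsw SimpleGraph.Walk.nil)⟩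
          rw [Ne, hr.dist_eq_zero_iff]
          exact fun h => hwi h.symm
        have hcases : G.dist i w = 1 ∨ G.dist i w = 2 := by omega
        rcases hcases with h | h
        · exact Finset.mem_union_left _ (Finset.mem_insert.mpr (Or.inr
            ((G.mem_neighborFinset i w).mpr (SimpleGraph.dist_eq_one_iff_adj.mp h))))
        · exact Finset.mem_union_right _ (Finset.mem_filter.mpr ⟨Finset.mem_univ _, h⟩)
    -- w ∈ J ∩ M' ⊆ I, contradicting hsI
    exact hsI w (hJI (Finset.mem_inter.mpr ⟨hwJ, hwM⟩)) hsw
end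

section
/- Let G_c be a finite simple graph, i a vertex of G_c, and S a set of vertices with i ∈ S ⊆ N[i]. If S is a feasible set, then for any vertex l ∈ (N[i] \ S), the set S ∪ {l} is also a feasible set. -/
variable {V : Type*} [Fintype V] [DecidableEq V]

lemma exists_max_indep_superset (G : SimpleGraph V) (I : Finset V)
    (hI : IsIndepF G I) : ∃ J, IsMaxIndepF G J ∧ I ⊆ J := by
  classical
  obtain ⟨J, hJmem, hmax⟩ :=
    Finset.exists_max_image
      ((Finset.univ.powerset).filter (fun J => IsIndepF G J ∧ I ⊆ J))
      Finset.card ⟨I, by simp [hI]⟩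
  simp only [Finset.mem_filter] at hJmem
  refine ⟨J, ⟨hJmem.2.1, fun K hK hJK => ?_⟩, hJmem.2.2⟩
  refine Finset.eq_of_subset_of_card_le hJK ?_
  exact hmax K (by simp [hK, hJmem.2.2.trans hJK])

/-- If `i ∈ S ⊆ N[i]` and `S` is a feasible set, then for any vertex
`l ∈ N[i] \ S`, the set `S ∪ {l}` is also a feasible set. -/
theorem feasible_insert (G : SimpleGraph V) [DecidableRel G.Adj]
    (i : V) (S : Finset V) (hiS : i ∈ S)
    (hSN : S ⊆ insert i (G.neighborFinset i))
    (hS : FeasibleSet G S)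
    (l : V) (hl : l ∈ insert i (G.neighborFinset i) \ S) :
    FeasibleSet G (insert l S) := by
  classical
  obtain ⟨hlN, hlS⟩ := Finset.mem_sdiff.mp hl
  have hli : l ≠ i := fun h => hlS (h ▸ hiS)
  have hadj : G.Adj i l := by
    rcases Finset.mem_insert.mp hlN with h | h
    · exact absurd h hli
    · exact (SimpleGraph.mem_neighborFinset _ _ _).mp h
  -- a maximal independent set containing i
  obtain ⟨J, hJmax, hiJ⟩ := exists_max_indep_superset G {i}
    (by intro a ha b hb; simp at ha hb; subst ha; subst hb; exact G.irrefl)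
  have hiJ' : i ∈ J := hiJ (Finset.mem_singleton_self i)
  have hJcap : J ∩ insert l S = {i} := by
    apply Finset.Subset.antisymm
    · intro x hx
      obtain ⟨hxJ, hxS⟩ := Finset.mem_inter.mp hx
      rcases Finset.mem_insert.mp hxS with rfl | hxS
      · exact absurd hadj (hJmax.1 i hiJ' x hxJ)
      · rcases Finset.mem_insert.mp (hSN hxS) with rfl | h
        · exact Finset.mem_singleton_self x
        · exact absurd ((SimpleGraph.mem_neighborFinset _ _ _).mp h)
            (hJmax.1 i hiJ' x hxJ)
    · intro x hx
      simp only [Finset.mem_singleton] at hx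
      subst hx
      exact Finset.mem_inter.mpr ⟨hiJ', Finset.mem_insert_of_mem hiS⟩
  refine le_antisymm (Nat.sInf_le ⟨J, hJmax, by rw [hJcap]; simp⟩) ?_
  refine le_csInf ⟨1, J, hJmax, by rw [hJcap]; simp⟩ ?_
  rintro n ⟨I, hImax, rfl⟩
  have h1 : 1 ≤ (I ∩ S).card := by
    have hmem : (I ∩ S).card ∈ {n : ℕ | ∃ I : Finset V,
        IsMaxIndepF G I ∧ (I ∩ S).card = n} := ⟨I, hImax, rfl⟩
    have := Nat.sInf_le hmem
    rw [hS] at this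
    exact this
  exact h1.trans (Finset.card_le_card (Finset.inter_subset_inter_left
    (Finset.subset_insert l S)))
end

section
/- Let G_c be a finite simple graph, i a vertex of G_c, and S a set of vertices with i ∈ S ⊆ N[i]. If S is not a feasible set, then for any vertex l' ∈ S, the set S \ {l'} is also not a feasible set. -/
variable {V : Type*} [Fintype V] [DecidableEq V]

/-- Every independent set extends to a maximal independent set. -/
lemma exists_maxIndep_ext (G : SimpleGraph V) (I : Finset V) (hI : IsIndepF G I) :
    ∃ J : Finset V, IsMaxIndepF G J ∧ I ⊆ J := by
  classical
  let t : Finset (Finset V) := Finset.univ.filter (fun J => IsIndepF G J ∧ I ⊆ J)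
  have ht : t.Nonempty := ⟨I, by simp [t, hI]⟩
  obtain ⟨J, hJt, hJmax⟩ := t.exists_max_image Finset.card ht
  simp only [t, Finset.mem_filter, Finset.mem_univ, true_and] at hJt hJmax
  refine ⟨J, ⟨hJt.1, fun K hK hJK => ?_⟩, hJt.2⟩
  exact Finset.eq_of_subset_of_card_le hJK
    (hJmax K ⟨hK, hJt.2.trans hJK⟩)

/-- If `i ∈ S ⊆ N[i]` and `S` is not a feasible set, then for any vertex
`l' ∈ S`, the set `S \ {l'}` is also not a feasible set. -/
theorem not_feasible_erase (G : SimpleGraph V) [DecidableRel G.Adj]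
    (i : V) (S : Finset V) (hiS : i ∈ S)
    (hSN : S ⊆ insert i (G.neighborFinset i))
    (hS : ¬ FeasibleSet G S)
    (l' : V) (hl' : l' ∈ S) :
    ¬ FeasibleSet G (S.erase l') := by
  classical
  -- a maximal independent set containing i
  obtain ⟨J, hJmax, hiJ⟩ := exists_maxIndep_ext G {i}
    (by intro a ha b hb; simp only [Finset.mem_singleton] at ha hb; rw [ha, hb]; exact G.loopless.irrefl i)
  have hiJ' : i ∈ J := hiJ (Finset.mem_singleton_self i)
  -- J ∩ S = {i}
  have hJS : J ∩ S = {i} := by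
    apply Finset.Subset.antisymm
    · intro x hx
      rw [Finset.mem_inter] at hx
      rcases Finset.mem_insert.mp (hSN hx.2) with h | h
      · simp [h]
      · exact absurd (G.mem_neighborFinset i x |>.mp h)
          (hJmax.1 i hiJ' x hx.1)
    · intro x hx
      rw [Finset.mem_singleton] at hx
      subst hx
      exact Finset.mem_inter.mpr ⟨hiJ', hiS⟩
  have h1 : (1 : ℕ) ∈ {n : ℕ | ∃ I : Finset V, IsMaxIndepF G I ∧ (I ∩ S).card = n} :=
    ⟨J, hJmax, by rw [hJS]; simp⟩
  have hle : sInf {n : ℕ | ∃ I : Finset V, IsMaxIndepF G I ∧ (I ∩ S).card = n} ≤ 1 :=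
    Nat.sInf_le h1
  have h0 : sInf {n : ℕ | ∃ I : Finset V, IsMaxIndepF G I ∧ (I ∩ S).card = n} = 0 := by
    unfold FeasibleSet at hS; omega
  have h0mem : (0 : ℕ) ∈ {n : ℕ | ∃ I : Finset V, IsMaxIndepF G I ∧ (I ∩ S).card = n} := by
    rcases (Nat.sInf_eq_zero.mp h0) with h | h
    · exact h
    · exact absurd h1 (by rw [h]; simp)
  obtain ⟨K, hKmax, hKS⟩ := h0mem
  have hKempty : K ∩ S = ∅ := Finset.card_eq_zero.mp hKS
  have hKe : K ∩ S.erase l' = ∅ := by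
    apply Finset.eq_empty_of_forall_notMem
    intro x hx
    rw [Finset.mem_inter] at hx
    have : x ∈ K ∩ S := Finset.mem_inter.mpr ⟨hx.1, Finset.erase_subset _ _ hx.2⟩
    rw [hKempty] at this; exact absurd this (Finset.notMem_empty x)
  intro hfeas
  unfold FeasibleSet at hfeas
  have : sInf {n : ℕ | ∃ I : Finset V, IsMaxIndepF G I ∧ (I ∩ S.erase l').card = n} = 0 :=
    Nat.sInf_eq_zero.mpr (Or.inl ⟨K, hKmax, by rw [hKe]; simp⟩)
  omega
end

section
/- Necessary condition for URLLC schedulability: Suppose there exists a schedule on N channels that meets the demand of every link. Then for every vertex i of the conflict graph G_c and every clique K of G_c with i ∈ K and K ⊆ N[i], the total utilization satisfies ∑_{l ∈ K} X_l / T_l ≤ N. -/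
variable {V : Type*} [Fintype V] [DecidableEq V]

/-- A schedule on `N` channels meets the demand of link `l` if, for every
packet index `p`, link `l` is active at least `X l` times (counting pairs of
slot and channel) within the window `[A l + p * T l, A l + p * T l + D l)`. -/
def MeetsDemand {N : ℕ} (sched : ℕ → Fin N → Finset V)
    (A T D X : V → ℕ) (l : V) : Prop :=
  ∀ p : ℕ,
    X l ≤ ((Finset.Ico (A l + p * T l) (A l + p * T l + D l) ×ˢ
      (Finset.univ : Finset (Fin N))).filter fun tc => l ∈ sched tc.1 tc.2).card

/-- Necessary condition for URLLC schedulability: if some schedule on `N`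
channels meets the demand of every link, then for every vertex `i` and every
clique `K` with `i ∈ K ⊆ N[i]`, the total utilization `∑_{l ∈ K} X_l / T_l`
is at most `N`. -/
theorem necessary_condition (G : SimpleGraph V) [DecidableRel G.Adj]
    (N : ℕ) (hN : 1 ≤ N) (A T D X : V → ℕ)
    (hT : ∀ l, 1 ≤ T l) (hD1 : ∀ l, 1 ≤ D l) (hDT : ∀ l, D l ≤ T l)
    (sched : ℕ → Fin N → Finset V)
    (hsched : ∀ t c, IsIndepF G (sched t c))
    (hmeets : ∀ l : V, MeetsDemand sched A T D X l) :
    ∀ (i : V) (K : Finset V), G.IsClique (K : Set V) → i ∈ K →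
      K ⊆ insert i (G.neighborFinset i) →
      ∑ l ∈ K, (X l : ℝ) / (T l : ℝ) ≤ (N : ℝ) := by
  classical
  intro i K hK hiK hKsub
  set P : ℕ := ∏ l ∈ K, T l with hPdef
  have hPpos : 0 < P := Finset.prod_pos (fun l _ => hT l)
  have hdvd : ∀ l ∈ K, T l ∣ P := fun l hl => Finset.dvd_prod_of_mem T hl
  set B : ℕ := K.sup A with hBdef
  set W : V → ℕ → Finset (ℕ × Fin N) := fun l p =>
    (Finset.Ico (A l + p * T l) (A l + p * T l + D l) ×ˢ
      (Finset.univ : Finset (Fin N))).filter (fun tc => l ∈ sched tc.1 tc.2) with hWdef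
  -- disjointness of W sets
  have hWmem : ∀ l p tc, tc ∈ W l p →
      (A l + p * T l ≤ tc.1 ∧ tc.1 < A l + p * T l + D l) ∧ l ∈ sched tc.1 tc.2 := by
    intro l p tc htc
    simp only [hWdef, Finset.mem_filter, Finset.mem_product, Finset.mem_Ico] at htc
    exact ⟨htc.1.1, htc.2⟩
  have hdisj_same : ∀ l, ∀ p p' : ℕ, p ≠ p' → Disjoint (W l p) (W l p') := by
    have aux : ∀ l, ∀ p p' : ℕ, p < p' → Disjoint (W l p) (W l p') := by
      intro l p p' hpp'
      rw [Finset.disjoint_left]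
      intro tc h1 h2
      have h1' := (hWmem l p tc h1).1
      have h2' := (hWmem l p' tc h2).1
      have : A l + p * T l + D l ≤ A l + p' * T l := by
        have : (p + 1) * T l ≤ p' * T l := Nat.mul_le_mul_right _ hpp'
        have hDT' := hDT l
        nlinarith
      omega
    intro l p p' hne
    rcases lt_or_gt_of_ne hne with h | h
    · exact aux l p p' h
    · exact (aux l p' p h).symm
  have hdisj_diff : ∀ l ∈ K, ∀ l' ∈ K, l ≠ l' → ∀ p p' : ℕ,
      Disjoint (W l p) (W l' p') := by
    intro l hl l' hl' hne p p'
    rw [Finset.disjoint_left]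
    intro tc h1 h2
    have h1' := (hWmem l p tc h1).2
    have h2' := (hWmem l' p' tc h2).2
    exact hsched tc.1 tc.2 l h1' l' h2'
      (hK (Finset.mem_coe.mpr hl) (Finset.mem_coe.mpr hl') hne)
  -- key counting bound
  have key : ∀ m : ℕ, m * ∑ l ∈ K, X l * (P / T l) ≤ (B + m * P) * N := by
    intro m
    set U : Finset (ℕ × Fin N) :=
      K.biUnion (fun l => (Finset.range (m * (P / T l))).biUnion (W l)) with hUdef
    have hUcard : U.card = ∑ l ∈ K, ∑ p ∈ Finset.range (m * (P / T l)), (W l p).card := by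
      rw [hUdef, Finset.card_biUnion]
      · exact Finset.sum_congr rfl fun l _ =>
          Finset.card_biUnion (fun p _ p' _ hne => hdisj_same l p p' hne)
      · intro l hl l' hl' hne
        dsimp only [Function.onFun]
        rw [Finset.disjoint_biUnion_left]
        intro p _
        rw [Finset.disjoint_biUnion_right]
        intro p' _
        exact hdisj_diff l hl l' hl' hne p p'
    have hUsub : U ⊆ Finset.Ico 0 (B + m * P) ×ˢ (Finset.univ : Finset (Fin N)) := by
      intro tc htc
      rw [hUdef, Finset.mem_biUnion] at htc
      obtain ⟨l, hl, htc⟩ := htc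
      rw [Finset.mem_biUnion] at htc
      obtain ⟨p, hp, htc⟩ := htc
      rw [Finset.mem_range] at hp
      have h1 := (hWmem l p tc htc).1
      have hAB : A l ≤ B := Finset.le_sup hl
      have hmul : m * (P / T l) * T l = m * P := by
        rw [Nat.mul_assoc, Nat.div_mul_cancel (hdvd l hl)]
      have hbound : tc.1 < B + m * P := by
        have h2 : A l + p * T l + D l ≤ A l + (p + 1) * T l := by
          have := hDT l; nlinarith
        have h3 : (p + 1) * T l ≤ m * (P / T l) * T l :=
          Nat.mul_le_mul_right _ hp
        omega
      simp [Finset.mem_product, Finset.mem_Ico, hbound]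
    have hUub : U.card ≤ (B + m * P) * N := by
      calc U.card ≤ (Finset.Ico 0 (B + m * P) ×ˢ (Finset.univ : Finset (Fin N))).card :=
            Finset.card_le_card hUsub
        _ = (B + m * P) * N := by
            rw [Finset.card_product, Nat.card_Ico]
            simp
    have hUlb : m * ∑ l ∈ K, X l * (P / T l) ≤ U.card := by
      rw [hUcard, Finset.mul_sum]
      refine Finset.sum_le_sum fun l hl => ?_
      calc m * (X l * (P / T l)) = ∑ _p ∈ Finset.range (m * (P / T l)), X l := by
            rw [Finset.sum_const, Finset.card_range]; ring
        _ ≤ ∑ p ∈ Finset.range (m * (P / T l)), (W l p).card :=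
            Finset.sum_le_sum fun p _ => hmeets l p
    omega
  -- nat form of the conclusion
  have hnat : ∑ l ∈ K, X l * (P / T l) ≤ P * N := by
    by_contra h
    push_neg at h
    have hkey := key (B * N + 1)
    have : (B * N + 1) * (P * N + 1) ≤ (B + (B * N + 1) * P) * N := by
      calc (B * N + 1) * (P * N + 1) ≤ (B * N + 1) * ∑ l ∈ K, X l * (P / T l) :=
            Nat.mul_le_mul_left _ h
        _ ≤ _ := hkey
    nlinarith
  -- pass to reals
  have hPne : (P : ℝ) ≠ 0 := Nat.cast_ne_zero.mpr hPpos.ne'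
  have heq : ∑ l ∈ K, (X l : ℝ) / (T l : ℝ)
      = ((∑ l ∈ K, X l * (P / T l) : ℕ) : ℝ) / (P : ℝ) := by
    push_cast
    rw [Finset.sum_div]
    refine Finset.sum_congr rfl fun l hl => ?_
    have hTne : (T l : ℝ) ≠ 0 := Nat.cast_ne_zero.mpr (Nat.one_le_iff_ne_zero.mp (hT l))
    rw [Nat.cast_div (hdvd l hl) hTne]
    field_simp
  rw [heq]
  rw [div_le_iff₀ (by positivity)]
  calc ((∑ l ∈ K, X l * (P / T l) : ℕ) : ℝ) ≤ ((P * N : ℕ) : ℝ) := Nat.cast_le.mpr hnat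
    _ = (N : ℝ) * (P : ℝ) := by push_cast; ring
end
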